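/- For each p ∈ (0,1), there is a unique α ∈ (1/2, 1) satisfying (1/(4^{1/(2α)}·√π)) · Γ(1/2 - 1/(2α)) / Γ(1 - 1/(2α)) = p/(p-1). -/

import Mathlib

open Real Set Filter

namespace ExponentAux

/-- The auxiliary function `h x = 4^(-x) * tan (π (1-x)) * Γ x / Γ (x + 1/2)`. -/
noncomputable def h (x : ℝ) : ℝ :=
  (4 : ℝ) ^ (-x) * Real.tan (Real.pi * (1 - x)) * Real.Gamma x / Real.Gamma (x + 1/2)

lemma gamma_prod_le {x y : ℝ} (hx : 0 < x) (hxy : x < y) :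
    Real.Gamma y * Real.Gamma (x + 1/2) ≤ Real.Gamma x * Real.Gamma (y + 1/2) := by
  set f : ℝ → ℝ := Real.log ∘ Real.Gamma with hf
  have hconv := Real.convexOn_log_Gamma
  have hd : (0:ℝ) < y + 1/2 - x := by linarith
  set t : ℝ := (y - x) / (y + 1/2 - x) with ht
  have ht0 : 0 < t := div_pos (by linarith) hd
  have ht1 : t < 1 := (div_lt_one hd).2 (by linarith)
  have hmemx : x ∈ Set.Ioi (0:ℝ) := hx
  have hmemy : y + 1/2 ∈ Set.Ioi (0:ℝ) := by simp; linarith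
  have ht' : t * (y + 1/2 - x) = y - x := div_mul_cancel₀ _ (ne_of_gt hd)
  have e1 : (1 - t) * x + t * (y + 1/2) = y := by linear_combination ht'
  have e2 : t * x + (1 - t) * (y + 1/2) = x + 1/2 := by linear_combination -ht'
  have c1 := hconv.2 hmemx hmemy (by linarith : (0:ℝ) ≤ 1 - t) (le_of_lt ht0) (by ring)
  have c2 := hconv.2 hmemx hmemy (le_of_lt ht0) (by linarith : (0:ℝ) ≤ 1 - t) (by ring)
  rw [smul_eq_mul, smul_eq_mul, smul_eq_mul, smul_eq_mul] at c1 c2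
  rw [e1] at c1
  rw [e2] at c2
  have hsum : f y + f (x + 1/2) ≤ f x + f (y + 1/2) := by
    have := add_le_add c1 c2
    calc f y + f (x + 1/2) ≤ ((1 - t) * f x + t * f (y + 1/2)) + (t * f x + (1 - t) * f (y + 1/2)) := this
    _ = f x + f (y + 1/2) := by ring
  have hgx : 0 < Real.Gamma x := Real.Gamma_pos_of_pos hx
  have hgy : 0 < Real.Gamma y := Real.Gamma_pos_of_pos (lt_trans hx hxy)
  have hgx2 : 0 < Real.Gamma (x + 1/2) := Real.Gamma_pos_of_pos (by linarith)
  have hgy2 : 0 < Real.Gamma (y + 1/2) := Real.Gamma_pos_of_pos (by linarith)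
  have : Real.log (Real.Gamma y * Real.Gamma (x + 1/2)) ≤
      Real.log (Real.Gamma x * Real.Gamma (y + 1/2)) := by
    rw [Real.log_mul (ne_of_gt hgy) (ne_of_gt hgx2),
        Real.log_mul (ne_of_gt hgx) (ne_of_gt hgy2)]
    exact hsum
  exact (Real.log_le_log_iff (mul_pos hgy hgx2) (mul_pos hgx hgy2)).1 this

lemma h_pos {x : ℝ} (hx : x ∈ Set.Ioo (1/2 : ℝ) 1) : 0 < h x := by
  obtain ⟨hx1, hx2⟩ := hx
  have hpi := Real.pi_pos
  have ha : (0:ℝ) < (4:ℝ) ^ (-x) := Real.rpow_pos_of_pos (by norm_num) _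
  have harg1 : 0 < Real.pi * (1 - x) := by nlinarith
  have harg2 : Real.pi * (1 - x) < Real.pi / 2 := by nlinarith
  have hb : 0 < Real.tan (Real.pi * (1 - x)) :=
    Real.tan_pos_of_pos_of_lt_pi_div_two harg1 harg2
  have hgx : 0 < Real.Gamma x := Real.Gamma_pos_of_pos (by linarith)
  have hgx2 : 0 < Real.Gamma (x + 1/2) := Real.Gamma_pos_of_pos (by linarith)
  exact div_pos (mul_pos (mul_pos ha hb) hgx) hgx2

lemma h_strictAntiOn : StrictAntiOn h (Set.Ioo (1/2 : ℝ) 1) := by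
  intro x hx y hy hxy
  obtain ⟨hx1, hx2⟩ := hx
  obtain ⟨hy1, hy2⟩ := hy
  have hpi := Real.pi_pos
  -- positivity facts
  have hax : (0:ℝ) < (4:ℝ) ^ (-x) := Real.rpow_pos_of_pos (by norm_num) _
  have hay : (0:ℝ) < (4:ℝ) ^ (-y) := Real.rpow_pos_of_pos (by norm_num) _
  have hargx1 : 0 < Real.pi * (1 - x) := by nlinarith
  have hargx2 : Real.pi * (1 - x) < Real.pi / 2 := by nlinarith
  have hargy1 : 0 < Real.pi * (1 - y) := by nlinarith
  have hargy2 : Real.pi * (1 - y) < Real.pi / 2 := by nlinarith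
  have hbx : 0 < Real.tan (Real.pi * (1 - x)) :=
    Real.tan_pos_of_pos_of_lt_pi_div_two hargx1 hargx2
  have hby : 0 < Real.tan (Real.pi * (1 - y)) :=
    Real.tan_pos_of_pos_of_lt_pi_div_two hargy1 hargy2
  have hgx : 0 < Real.Gamma x := Real.Gamma_pos_of_pos (by linarith)
  have hgy : 0 < Real.Gamma y := Real.Gamma_pos_of_pos (by linarith)
  have hgx2 : 0 < Real.Gamma (x + 1/2) := Real.Gamma_pos_of_pos (by linarith)
  have hgy2 : 0 < Real.Gamma (y + 1/2) := Real.Gamma_pos_of_pos (by linarith)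
  -- strict decrease of 4^(-x)
  have hA : (4:ℝ) ^ (-y) < (4:ℝ) ^ (-x) :=
    (Real.rpow_lt_rpow_left_iff (by norm_num : (1:ℝ) < 4)).2 (by linarith)
  -- strict decrease of tan factor
  have hB : Real.tan (Real.pi * (1 - y)) < Real.tan (Real.pi * (1 - x)) := by
    apply Real.strictMonoOn_tan
    · constructor <;> nlinarith
    · constructor <;> nlinarith
    · nlinarith
  -- gamma ratio antitone
  have hC : Real.Gamma y / Real.Gamma (y + 1/2) ≤ Real.Gamma x / Real.Gamma (x + 1/2) := by
    rw [div_le_div_iff₀ hgy2 hgx2]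
    exact gamma_prod_le (by linarith) hxy
  have hABy : 0 < (4:ℝ) ^ (-y) * Real.tan (Real.pi * (1 - y)) := mul_pos hay hby
  have hAB : (4:ℝ) ^ (-y) * Real.tan (Real.pi * (1 - y)) <
      (4:ℝ) ^ (-x) * Real.tan (Real.pi * (1 - x)) := by
    calc (4:ℝ) ^ (-y) * Real.tan (Real.pi * (1 - y))
        < (4:ℝ) ^ (-y) * Real.tan (Real.pi * (1 - x)) := by
          exact (mul_lt_mul_iff_right₀ hay).2 hB
    _ ≤ (4:ℝ) ^ (-x) * Real.tan (Real.pi * (1 - x)) := by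
          exact mul_le_mul_of_nonneg_right (le_of_lt hA) (le_of_lt hbx)
  have hCx : 0 < Real.Gamma x / Real.Gamma (x + 1/2) := div_pos hgx hgx2
  show h y < h x
  unfold h
  rw [mul_div_assoc, mul_div_assoc]
  calc (4:ℝ) ^ (-y) * Real.tan (Real.pi * (1 - y)) * (Real.Gamma y / Real.Gamma (y + 1/2))
      ≤ (4:ℝ) ^ (-y) * Real.tan (Real.pi * (1 - y)) * (Real.Gamma x / Real.Gamma (x + 1/2)) :=
        mul_le_mul_of_nonneg_left hC (le_of_lt hABy)
  _ < (4:ℝ) ^ (-x) * Real.tan (Real.pi * (1 - x)) * (Real.Gamma x / Real.Gamma (x + 1/2)) :=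
        (mul_lt_mul_iff_left₀ hCx).2 hAB

lemma continuousAt_h {x : ℝ} (hx : 0 < x) (hcos : Real.cos (Real.pi * (1 - x)) ≠ 0) :
    ContinuousAt h x := by
  have h1 : ContinuousAt (fun x : ℝ => (4:ℝ) ^ (-x)) x :=
    (Real.continuousAt_const_rpow (by norm_num : (4:ℝ) ≠ 0)).comp (continuousAt_neg)
  have h2 : ContinuousAt (fun x : ℝ => Real.tan (Real.pi * (1 - x))) x :=
    ContinuousAt.comp (g := Real.tan) (f := fun x : ℝ => Real.pi * (1 - x))
      (Real.continuousAt_tan.2 hcos) (by fun_prop)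
  have h3 : ContinuousAt Real.Gamma x :=
    (Real.differentiableAt_Gamma (fun m => ne_of_gt
      (lt_of_le_of_lt (neg_nonpos.2 (Nat.cast_nonneg m)) hx))).continuousAt
  have h4 : ContinuousAt (fun x : ℝ => Real.Gamma (x + 1/2)) x :=
    ContinuousAt.comp (g := Real.Gamma) (f := fun x : ℝ => x + 1/2)
      ((Real.differentiableAt_Gamma (fun m => ne_of_gt
        (lt_of_le_of_lt (neg_nonpos.2 (Nat.cast_nonneg m)) (by linarith)))).continuousAt)
      (by fun_prop)
  have h5 : Real.Gamma (x + 1/2) ≠ 0 := ne_of_gt (Real.Gamma_pos_of_pos (by linarith))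
  exact ((h1.mul h2).mul h3).div h4 h5

/-- The key identity relating the original expression to `h`. -/
lemma key_identity {x : ℝ} (hx : x ∈ Set.Ioo (1/2 : ℝ) 1) :
    (1 / ((4 : ℝ) ^ x * Real.sqrt Real.pi)) * Real.Gamma (1/2 - x) / Real.Gamma (1 - x)
      = -(h x) / Real.sqrt Real.pi := by
  obtain ⟨hx1, hx2⟩ := hx
  have hpi := Real.pi_pos
  have hsinpos : 0 < Real.sin (Real.pi * x) :=
    Real.sin_pos_of_pos_of_lt_pi (by nlinarith) (by nlinarith)
  have hcosneg : Real.cos (Real.pi * x) < 0 :=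
    Real.cos_neg_of_pi_div_two_lt_of_lt (by nlinarith) (by nlinarith)
  have hcosne : Real.cos (Real.pi * x) ≠ 0 := ne_of_lt hcosneg
  have hsinne : Real.sin (Real.pi * x) ≠ 0 := ne_of_gt hsinpos
  have hgx : 0 < Real.Gamma x := Real.Gamma_pos_of_pos (by linarith)
  have hgx2 : 0 < Real.Gamma (x + 1/2) := Real.Gamma_pos_of_pos (by linarith)
  -- reflection formulas
  have r1 : Real.Gamma (1/2 - x) * Real.Gamma (x + 1/2) * Real.cos (Real.pi * x) = Real.pi := by
    have h0 := Real.Gamma_mul_Gamma_one_sub (1/2 - x)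
    have e : (1:ℝ) - (1/2 - x) = x + 1/2 := by ring
    rw [e] at h0
    have e2 : Real.pi * (1/2 - x) = Real.pi / 2 - Real.pi * x := by ring
    rw [e2, Real.sin_pi_div_two_sub] at h0
    rw [eq_div_iff hcosne] at h0
    exact h0
  have r2 : Real.Gamma (1 - x) * Real.Gamma x * Real.sin (Real.pi * x) = Real.pi := by
    have h0 := Real.Gamma_mul_Gamma_one_sub (1 - x)
    have e : (1:ℝ) - (1 - x) = x := by ring
    rw [e] at h0
    have e2 : Real.pi * (1 - x) = Real.pi - Real.pi * x := by ring
    rw [e2, Real.sin_pi_sub] at h0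
    rw [eq_div_iff hsinne] at h0
    exact h0
  have g1 : Real.Gamma (1/2 - x) =
      Real.pi / (Real.cos (Real.pi * x) * Real.Gamma (x + 1/2)) := by
    rw [eq_div_iff (mul_ne_zero hcosne (ne_of_gt hgx2))]
    linear_combination r1
  have g2 : Real.Gamma (1 - x) =
      Real.pi / (Real.sin (Real.pi * x) * Real.Gamma x) := by
    rw [eq_div_iff (mul_ne_zero hsinne (ne_of_gt hgx))]
    linear_combination r2
  have tanrw : Real.tan (Real.pi * (1 - x)) =
      -(Real.sin (Real.pi * x) / Real.cos (Real.pi * x)) := by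
    have e2 : Real.pi * (1 - x) = Real.pi - Real.pi * x := by ring
    rw [e2, Real.tan_pi_sub, Real.tan_eq_sin_div_cos]
  have h4x : (0:ℝ) < (4:ℝ) ^ x := Real.rpow_pos_of_pos (by norm_num) _
  have h4nx : ((4:ℝ) ^ (-x)) = ((4:ℝ) ^ x)⁻¹ := by
    rw [Real.rpow_neg (by norm_num : (0:ℝ) ≤ 4)]
  have hsqrt : 0 < Real.sqrt Real.pi := Real.sqrt_pos.2 hpi
  rw [g1, g2]
  unfold h
  rw [tanrw, h4nx]
  field_simp

end ExponentAux

open ExponentAux in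
/-- For each `p ∈ (0,1)`, there is a unique `α ∈ (1/2, 1)` satisfying
`(1/(4^{1/(2α)}·√π)) · Γ(1/2 - 1/(2α)) / Γ(1 - 1/(2α)) = p/(p-1)`. -/
theorem exists_unique_exponent (p : ℝ) (hp : p ∈ Set.Ioo (0 : ℝ) 1) :
    ∃! α : ℝ, α ∈ Set.Ioo (1 / 2 : ℝ) 1 ∧
      (1 / ((4 : ℝ) ^ (1 / (2 * α)) * Real.sqrt Real.pi))
          * Real.Gamma (1 / 2 - 1 / (2 * α)) / Real.Gamma (1 - 1 / (2 * α))
        = p / (p - 1) := by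
  obtain ⟨hp0, hp1⟩ := hp
  have hpi := Real.pi_pos
  have hsqrt : 0 < Real.sqrt Real.pi := Real.sqrt_pos.2 hpi
  set c : ℝ := Real.sqrt Real.pi * (p / (1 - p)) with hc
  have hcpos : 0 < c := mul_pos hsqrt (div_pos hp0 (by linarith))
  -- equivalence between the equation and h x = c
  have equiv_eq : ∀ x ∈ Set.Ioo (1/2 : ℝ) 1,
      ((1 / ((4 : ℝ) ^ x * Real.sqrt Real.pi)) * Real.Gamma (1/2 - x) / Real.Gamma (1 - x)
        = p / (p - 1)) ↔ h x = c := by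
    intro x hx
    rw [key_identity hx]
    have hp1' : p - 1 ≠ 0 := sub_ne_zero.2 (ne_of_lt hp1)
    have hp1'' : (1:ℝ) - p ≠ 0 := sub_ne_zero.2 (ne_of_gt hp1)
    constructor
    · intro hE
      field_simp at hE
      rw [hc]
      field_simp
      linear_combination hE
    · intro hE
      rw [hE, hc]
      field_simp
      ring
  -- existence of x₀ with h x₀ = c via IVT
  -- behavior near 1/2 : h tends to atTop
  have tend_top : Filter.Tendsto h (nhdsWithin (1/2 : ℝ) (Set.Ioi (1/2 : ℝ))) Filter.atTop := by
    have hfactor : Filter.Tendsto (fun x : ℝ => (4:ℝ) ^ (-x) * Real.Gamma x / Real.Gamma (x + 1/2))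
        (nhdsWithin (1/2 : ℝ) (Set.Ioi (1/2 : ℝ)))
        (nhds ((4:ℝ) ^ (-(1/2:ℝ)) * Real.Gamma (1/2) / Real.Gamma (1/2 + 1/2))) := by
      apply Filter.Tendsto.mono_left _ nhdsWithin_le_nhds
      apply ContinuousAt.tendsto
      have h1 : ContinuousAt (fun x : ℝ => (4:ℝ) ^ (-x)) (1/2 : ℝ) :=
        (Real.continuousAt_const_rpow (by norm_num : (4:ℝ) ≠ 0)).comp continuousAt_neg
      have h3 : ContinuousAt Real.Gamma (1/2 : ℝ) :=
        (Real.differentiableAt_Gamma (fun m => ne_of_gt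
          (lt_of_le_of_lt (neg_nonpos.2 (Nat.cast_nonneg m)) (by norm_num)))).continuousAt
      have h4 : ContinuousAt (fun x : ℝ => Real.Gamma (x + 1/2)) (1/2 : ℝ) :=
        ContinuousAt.comp (g := Real.Gamma) (f := fun x : ℝ => x + 1/2)
          ((Real.differentiableAt_Gamma (fun m => ne_of_gt
            (lt_of_le_of_lt (neg_nonpos.2 (Nat.cast_nonneg m)) (by norm_num)))).continuousAt)
          (by fun_prop)
      exact (h1.mul h3).div h4 (by norm_num [Real.Gamma_one])
    have hpos : (0:ℝ) < (4:ℝ) ^ (-(1/2:ℝ)) * Real.Gamma (1/2) / Real.Gamma (1/2 + 1/2) := by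
      norm_num [Real.Gamma_one, Real.Gamma_one_half_eq]
      positivity
    have htan : Filter.Tendsto (fun x : ℝ => Real.tan (Real.pi * (1 - x)))
        (nhdsWithin (1/2 : ℝ) (Set.Ioi (1/2 : ℝ))) Filter.atTop := by
      apply Real.tendsto_tan_pi_div_two.comp
      rw [tendsto_nhdsWithin_iff]
      constructor
      · apply Filter.Tendsto.mono_left _ nhdsWithin_le_nhds
        have e : Real.pi / 2 = Real.pi * (1 - 1/2) := by ring
        rw [e]
        exact ((continuous_const.mul (continuous_const.sub continuous_id)).tendsto (1/2:ℝ))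
      · filter_upwards [self_mem_nhdsWithin] with x hx
        have hx' : (1/2:ℝ) < x := hx
        simp only [Set.mem_Iio]
        nlinarith
    have := Filter.Tendsto.pos_mul_atTop hpos hfactor htan
    apply this.congr'
    filter_upwards with x
    unfold h
    ring
  -- behavior near 1 : h tends to 0
  have tend_zero : Filter.Tendsto h (nhdsWithin (1 : ℝ) (Set.Iio (1 : ℝ))) (nhds 0) := by
    have hcont : ContinuousAt h 1 := by
      apply continuousAt_h (by norm_num)
      norm_num
    have : h 1 = 0 := by
      unfold h
      norm_num
    rw [← this]
    exact hcont.continuousWithinAt.tendsto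
  -- pick x₁ near 1/2 with h x₁ > c
  have ev1 : ∀ᶠ x in nhdsWithin (1/2 : ℝ) (Set.Ioi (1/2 : ℝ)),
      c < h x ∧ x ∈ Set.Ioo (1/2 : ℝ) 1 := by
    filter_upwards [tend_top.eventually_gt_atTop c,
      Ioo_mem_nhdsGT_of_mem (by norm_num : (1/2:ℝ) ∈ Set.Ico (1/2:ℝ) 1)] with x h1 h2
    exact ⟨h1, h2⟩
  obtain ⟨x₁, hx₁c, hx₁mem⟩ := ev1.exists
  -- pick x₂ near 1 with h x₂ < c
  have ev2 : ∀ᶠ x in nhdsWithin (1 : ℝ) (Set.Iio (1 : ℝ)),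
      h x < c ∧ x ∈ Set.Ioo (1/2 : ℝ) 1 := by
    filter_upwards [tend_zero.eventually_lt_const hcpos,
      Ioo_mem_nhdsLT_of_mem (by norm_num : (1:ℝ) ∈ Set.Ioc (1/2:ℝ) 1)] with x h1 h2
    exact ⟨h1, h2⟩
  obtain ⟨x₂, hx₂c, hx₂mem⟩ := ev2.exists
  have hx12 : x₁ < x₂ := by
    by_contra hcon
    push_neg at hcon
    rcases eq_or_lt_of_le hcon with heq | hlt
    · rw [heq] at hx₂c; linarith
    · have := h_strictAntiOn hx₂mem hx₁mem hlt
      linarith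
  -- IVT
  have hconton : ContinuousOn h (Set.Icc x₁ x₂) := by
    intro z hz
    have hz' : z ∈ Set.Ioo (1/2 : ℝ) 1 :=
      ⟨lt_of_lt_of_le hx₁mem.1 hz.1, lt_of_le_of_lt hz.2 hx₂mem.2⟩
    apply (continuousAt_h (by linarith [hz'.1]) _).continuousWithinAt
    have : 0 < Real.pi * (1 - z) := by nlinarith [hz'.2, Real.pi_pos]
    have : Real.pi * (1 - z) < Real.pi / 2 := by nlinarith [hz'.1, Real.pi_pos]
    exact ne_of_gt (Real.cos_pos_of_mem_Ioo ⟨by nlinarith [Real.pi_pos], by assumption⟩)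
  have hivt := intermediate_value_Icc' (le_of_lt hx12) hconton
  have hcmem : c ∈ Set.Icc (h x₂) (h x₁) := ⟨le_of_lt hx₂c, le_of_lt hx₁c⟩
  obtain ⟨x₀, hx₀mem', hx₀eq⟩ := hivt hcmem
  have hx₀mem : x₀ ∈ Set.Ioo (1/2 : ℝ) 1 :=
    ⟨lt_of_lt_of_le hx₁mem.1 hx₀mem'.1, lt_of_le_of_lt hx₀mem'.2 hx₂mem.2⟩
  -- build α
  set α : ℝ := 1 / (2 * x₀) with hα
  have hx₀pos : 0 < x₀ := by linarith [hx₀mem.1]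
  have hαmem : α ∈ Set.Ioo (1/2 : ℝ) 1 := by
    constructor
    · rw [hα]
      rw [div_lt_div_iff₀ (by norm_num) (by linarith)]
      linarith [hx₀mem.2]
    · rw [hα, div_lt_one (by linarith)]
      linarith [hx₀mem.1]
  have hαinv : 1 / (2 * α) = x₀ := by
    rw [hα]
    field_simp
  refine ⟨α, ⟨hαmem, ?_⟩, ?_⟩
  · rw [hαinv]
    exact (equiv_eq x₀ hx₀mem).2 hx₀eq
  · rintro α' ⟨hα'mem, hα'eq⟩
    set x' : ℝ := 1 / (2 * α') with hx'
    have hα'pos : 0 < α' := by linarith [hα'mem.1]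
    have hx'mem : x' ∈ Set.Ioo (1/2 : ℝ) 1 := by
      constructor
      · rw [hx', div_lt_div_iff₀ (by norm_num) (by linarith)]
        linarith [hα'mem.2]
      · rw [hx', div_lt_one (by linarith)]
        linarith [hα'mem.1]
    have hx'eq : h x' = c := by
      apply (equiv_eq x' hx'mem).1
      rw [hx']
      exact hα'eq
    have : x' = x₀ := h_strictAntiOn.injOn hx'mem hx₀mem (by rw [hx'eq, hx₀eq])
    rw [hα, ← this, hx']
    field_simp
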